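/- Let n ≥ 1, let J be the standard 2n×2n symplectic matrix, and let A, M be real 2n×2n matrices with M symmetric and positive definite, such that the complex Hermitian matrix M + i·(J − AᵀJA) is positive semidefinite. If f : ℝ^{2n} → ℂ is such that its twisted kernel K_f(ξ,η) = f(η−ξ)·exp(i·ξᵀJη) is a positive definite kernel, then the function g(ξ) = exp(−(1/2)·ξᵀMξ)·f(Aξ) also has a positive definite twisted kernel K_g(ξ,η) = g(η−ξ)·exp(i·ξᵀJη). -/

import Mathlib

noncomputable section
open Matrix Filter
open scoped ComplexOrder Topology

/-- A positive definite kernel on `ℝ^d` with complex values: all finite Gram-type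
sums are nonnegative real numbers (nonnegative in the complex order). -/
def PosDefKernel {d : ℕ} (K : (Fin d → ℝ) → (Fin d → ℝ) → ℂ) : Prop :=
  ∀ (m : ℕ) (ξ : Fin m → Fin d → ℝ) (c : Fin m → ℂ),
    0 ≤ ∑ j, ∑ k, (starRingEnd ℂ) (c j) * c k * K (ξ j) (ξ k)
/-- The standard `2n × 2n` symplectic matrix: block diagonal with `n` copies of
the block `((0,1),(-1,0))`. -/
def sympJ (n : ℕ) : Matrix (Fin (2*n)) (Fin (2*n)) ℝ :=
  Matrix.of fun j k =>
    if j.val % 2 = 0 ∧ k.val = j.val + 1 then 1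
    else if k.val % 2 = 0 ∧ j.val = k.val + 1 then -1 else 0
/-- The twisted kernel `K_f(ξ,η) = f(η-ξ) · exp(i ξᵀ J η)` of `f : ℝ^{2n} → ℂ`. -/
def twistedKernel {n : ℕ} (f : (Fin (2*n) → ℝ) → ℂ) :
    (Fin (2*n) → ℝ) → (Fin (2*n) → ℝ) → ℂ :=
  fun ξ η => f (η - ξ) * Complex.exp (Complex.I * ((ξ ⬝ᵥ (sympJ n).mulVec η : ℝ) : ℂ))


section AuxLemmas


/-- A matrix expressible as a finite sum of rank-one "conjugate pattern" matrices. -/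
def GramSum {m : ℕ} (B : Fin m → Fin m → ℂ) : Prop :=
  ∃ (ι : Type) (inst : Fintype ι) (u : ι → Fin m → ℂ),
    ∀ j k, B j k = ∑ s ∈ @Finset.univ ι inst, (starRingEnd ℂ) (u s j) * u s k

lemma gramSum_one {m : ℕ} : GramSum (fun _ _ : Fin m => (1 : ℂ)) :=
  ⟨PUnit, inferInstance, fun _ _ => 1, by simp⟩

lemma gramSum_mul {m : ℕ} {B₁ B₂ : Fin m → Fin m → ℂ} (h₁ : GramSum B₁) (h₂ : GramSum B₂) :
    GramSum (fun j k => B₁ j k * B₂ j k) := by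
  obtain ⟨ι₁, i₁, u₁, hu₁⟩ := h₁
  obtain ⟨ι₂, i₂, u₂, hu₂⟩ := h₂
  letI := i₁; letI := i₂
  refine ⟨ι₁ × ι₂, inferInstance, fun s j => u₁ s.1 j * u₂ s.2 j, fun j k => ?_⟩
  show B₁ j k * B₂ j k = _
  rw [hu₁, hu₂, Finset.sum_mul_sum]
  rw [← Finset.sum_product']
  apply Finset.sum_congr rfl
  intro s _
  simp only [_root_.map_mul]
  ring

lemma gramSum_smul {m : ℕ} {B : Fin m → Fin m → ℂ} {r : ℝ} (hr : 0 ≤ r) (h : GramSum B) :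
    GramSum (fun j k => (r : ℂ) * B j k) := by
  obtain ⟨ι, i, u, hu⟩ := h
  letI := i
  refine ⟨ι, inferInstance, fun s j => (Real.sqrt r : ℂ) * u s j, fun j k => ?_⟩
  show (r : ℂ) * B j k = _
  rw [hu, Finset.mul_sum]
  apply Finset.sum_congr rfl
  intro s _
  have h2 : (Real.sqrt r : ℂ) * (Real.sqrt r : ℂ) = (r : ℂ) := by
    rw [← Complex.ofReal_mul, Real.mul_self_sqrt hr]
  calc (r:ℂ) * ((starRingEnd ℂ) (u s j) * u s k)
      = ((Real.sqrt r : ℂ) * (Real.sqrt r : ℂ)) * ((starRingEnd ℂ) (u s j) * u s k) := by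
        rw [h2]
    _ = (starRingEnd ℂ) ((Real.sqrt r : ℂ) * u s j) * ((Real.sqrt r : ℂ) * u s k) := by
        simp only [_root_.map_mul, Complex.conj_ofReal]; ring

lemma gramSum_pow {m : ℕ} {B : Fin m → Fin m → ℂ} (h : GramSum B) (p : ℕ) :
    GramSum (fun j k => B j k ^ p) := by
  induction p with
  | zero => simpa using gramSum_one
  | succ p ih =>
      have := gramSum_mul ih h
      simpa [pow_succ] using this

lemma gramSum_sum {m : ℕ} {α : Type*} (s : Finset α) (B : α → Fin m → Fin m → ℂ)
    (h : ∀ a ∈ s, GramSum (B a)) : GramSum (fun j k => ∑ a ∈ s, B a j k) := by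
  classical
  induction s using Finset.induction with
  | empty => exact ⟨PEmpty, inferInstance, fun _ _ => 0, by simp⟩
  | @insert a t hnot ih =>
      obtain ⟨ι₁, i₁, u₁, hu₁⟩ := h a (Finset.mem_insert_self a t)
      obtain ⟨ι₂, i₂, u₂, hu₂⟩ := ih (fun b hb => h b (Finset.mem_insert_of_mem hb))
      letI := i₁; letI := i₂
      refine ⟨ι₁ ⊕ ι₂, inferInstance, Sum.elim u₁ u₂, fun j k => ?_⟩
      show ∑ b ∈ insert a t, B b j k = _
      rw [Finset.sum_insert hnot, hu₁]
      have := hu₂ j k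
      simp only at this
      rw [this, Fintype.sum_sum_type]
      simp

lemma key_nonneg {m : ℕ} {F B : Fin m → Fin m → ℂ}
    (hF : ∀ c : Fin m → ℂ, 0 ≤ ∑ j, ∑ k, (starRingEnd ℂ) (c j) * c k * F j k)
    (hB : GramSum B) (c : Fin m → ℂ) :
    0 ≤ ∑ j, ∑ k, (starRingEnd ℂ) (c j) * c k * (F j k * B j k) := by
  obtain ⟨ι, i, u, hu⟩ := hB
  letI := i
  have hrw : ∀ j k, (starRingEnd ℂ) (c j) * c k * (F j k * B j k)
      = ∑ s : ι, (starRingEnd ℂ) (c j * u s j) * (c k * u s k) * F j k := by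
    intro j k
    rw [hu, Finset.mul_sum, Finset.mul_sum]
    apply Finset.sum_congr rfl
    intro s _
    simp only [_root_.map_mul]
    ring
  calc (0:ℂ) ≤ ∑ s : ι, ∑ j, ∑ k,
        (starRingEnd ℂ) (c j * u s j) * (c k * u s k) * F j k := by
        apply Finset.sum_nonneg
        intro s _
        exact hF (fun j => c j * u s j)
    _ = ∑ j, ∑ k, (starRingEnd ℂ) (c j) * c k * (F j k * B j k) := by
        rw [Finset.sum_comm]
        apply Finset.sum_congr rfl
        intro j _
        rw [Finset.sum_comm]
        apply Finset.sum_congr rfl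
        intro k _
        rw [hrw]



lemma ofReal_dot {d : ℕ} (P : Matrix (Fin d) (Fin d) ℝ) (x y : Fin d → ℝ) :
    (fun i => ((x i : ℝ) : ℂ)) ⬝ᵥ (P.map Complex.ofReal).mulVec (fun i => ((y i : ℝ) : ℂ))
      = ((x ⬝ᵥ P.mulVec y : ℝ) : ℂ) := by
  simp only [dotProduct, Matrix.mulVec, Matrix.map_apply]
  push_cast
  ring

lemma dot_symm {d : ℕ} {P : Matrix (Fin d) (Fin d) ℝ} (hP : Pᵀ = P) (x y : Fin d → ℝ) :
    y ⬝ᵥ P.mulVec x = x ⬝ᵥ P.mulVec y := by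
  rw [Matrix.dotProduct_mulVec]
  conv_lhs => rw [← hP]
  rw [Matrix.vecMul_transpose, dotProduct_comm]

lemma dot_mulVec_shift {d : ℕ} (A P : Matrix (Fin d) (Fin d) ℝ) (x y : Fin d → ℝ) :
    (A.mulVec x) ⬝ᵥ P.mulVec (A.mulVec y) = x ⬝ᵥ (Aᵀ * P * A).mulVec y := by
  rw [← Matrix.mulVec_mulVec, ← Matrix.mulVec_mulVec,
    Matrix.dotProduct_mulVec x, Matrix.vecMul_transpose]

lemma adjoint_dot {d : ℕ} (S : Matrix (Fin d) (Fin d) ℂ) (a b : Fin d → ℂ) :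
    star (S.mulVec a) ⬝ᵥ S.mulVec b = star a ⬝ᵥ (Sᴴ * S).mulVec b := by
  rw [Matrix.star_mulVec, Matrix.dotProduct_mulVec, Matrix.dotProduct_mulVec,
    Matrix.vecMul_vecMul]

end AuxLemmas

/-- If `M` is real positive definite (in particular symmetric), the Hermitian matrix
`M + i(J - AᵀJA)` is positive semidefinite, and `f` has a positive definite twisted
kernel, then `g(ξ) = exp(-(1/2) ξᵀMξ) · f(Aξ)` also has a positive definite twisted kernel. -/
theorem twistedTransform_preserves_twistedKernel (n : ℕ) (hn : 1 ≤ n)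
    (A M : Matrix (Fin (2*n)) (Fin (2*n)) ℝ)
    (hMsymm : Mᵀ = M) (hM : M.PosDef)
    (hMA : (M.map Complex.ofReal +
      Complex.I • ((sympJ n - Aᵀ * sympJ n * A).map Complex.ofReal)).PosSemidef)
    (f : (Fin (2*n) → ℝ) → ℂ)
    (hf : PosDefKernel (twistedKernel f)) :
    PosDefKernel (twistedKernel fun ξ =>
      Complex.exp (-(1/2 : ℂ) * ((ξ ⬝ᵥ M.mulVec ξ : ℝ) : ℂ)) * f (A.mulVec ξ)) := by
  classical
  intro m ξ c
  obtain ⟨S, hS⟩ : ∃ S : Matrix (Fin (2*n)) (Fin (2*n)) ℂ, (M.map Complex.ofReal +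
      Complex.I • ((sympJ n - Aᵀ * sympJ n * A).map Complex.ofReal)) = Sᴴ * S := by
    open scoped MatrixOrder Matrix.Norms.L2Operator in
    exact CStarAlgebra.nonneg_iff_eq_star_mul_self.mp hMA.nonneg
  -- notation
  set Bm : Matrix (Fin (2*n)) (Fin (2*n)) ℝ := sympJ n - Aᵀ * sympJ n * A with hBm
  have hw : ∀ j : Fin m, True := fun _ => trivial
  set w : Fin m → Fin (2*n) → ℂ := fun j => S.mulVec (fun i => ((ξ j i : ℝ) : ℂ)) with hwdef
  set G : Fin m → Fin m → ℂ := fun j k => ∑ s, (starRingEnd ℂ) (w j s) * w k s with hGdef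
  have hGram : GramSum G := ⟨Fin (2*n), inferInstance, fun s j => w j s, fun j k => rfl⟩
  -- the value of G
  have hGval : ∀ j k, G j k = ((ξ j ⬝ᵥ M.mulVec (ξ k) : ℝ) : ℂ)
      + Complex.I * ((ξ j ⬝ᵥ Bm.mulVec (ξ k) : ℝ) : ℂ) := by
    intro j k
    have hstar : star (fun i => ((ξ j i : ℝ) : ℂ)) = (fun i => ((ξ j i : ℝ) : ℂ)) := by
      funext i
      simp [Complex.conj_ofReal]
    have h1 : G j k = star (w j) ⬝ᵥ w k := rfl
    rw [h1, hwdef]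
    rw [adjoint_dot, ← hS, hstar, Matrix.add_mulVec, dotProduct_add,
      Matrix.smul_mulVec, dotProduct_smul, ofReal_dot, ofReal_dot]
    simp [smul_eq_mul]
  -- modified coefficients and kernel matrix for f
  set d : Fin m → ℂ := fun j =>
    c j * Complex.exp (-(1/2 : ℂ) * ((ξ j ⬝ᵥ M.mulVec (ξ j) : ℝ) : ℂ)) with hddef
  set F : Fin m → Fin m → ℂ := fun j k =>
    twistedKernel f (A.mulVec (ξ j)) (A.mulVec (ξ k)) with hFdef
  have hFq : ∀ e : Fin m → ℂ, 0 ≤ ∑ j, ∑ k, (starRingEnd ℂ) (e j) * e k * F j k :=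
    fun e => hf m (fun j => A.mulVec (ξ j)) e
  -- pointwise identity
  have hpt : ∀ j k, (starRingEnd ℂ) (c j) * c k *
      (twistedKernel (fun z =>
        Complex.exp (-(1/2 : ℂ) * ((z ⬝ᵥ M.mulVec z : ℝ) : ℂ)) * f (A.mulVec z)) (ξ j) (ξ k))
      = (starRingEnd ℂ) (d j) * d k * (F j k * Complex.exp (G j k)) := by
    intro j k
    have ht := dot_mulVec_shift A (sympJ n) (ξ j) (ξ k)
    have hQ : (ξ k - ξ j) ⬝ᵥ M.mulVec (ξ k - ξ j)
        = ξ j ⬝ᵥ M.mulVec (ξ j) + ξ k ⬝ᵥ M.mulVec (ξ k) - 2 * (ξ j ⬝ᵥ M.mulVec (ξ k)) := by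
      rw [Matrix.mulVec_sub, dotProduct_sub, sub_dotProduct,
        sub_dotProduct, dot_symm hMsymm (ξ j) (ξ k)]
      ring
    have hBval : (ξ j ⬝ᵥ Bm.mulVec (ξ k) : ℝ)
        = ξ j ⬝ᵥ (sympJ n).mulVec (ξ k) - ξ j ⬝ᵥ (Aᵀ * sympJ n * A).mulVec (ξ k) := by
      rw [hBm, Matrix.sub_mulVec, dotProduct_sub]
    have hAarg : A.mulVec (ξ k - ξ j) = A.mulVec (ξ k) - A.mulVec (ξ j) :=
      Matrix.mulVec_sub A _ _
    -- abbreviations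
    set a : ℝ := ξ j ⬝ᵥ M.mulVec (ξ j) with hadef
    set b : ℝ := ξ k ⬝ᵥ M.mulVec (ξ k) with hbdef
    set q : ℝ := ξ j ⬝ᵥ M.mulVec (ξ k) with hqdef
    set p : ℝ := ξ j ⬝ᵥ (sympJ n).mulVec (ξ k) with hpdef
    set t : ℝ := ξ j ⬝ᵥ (Aᵀ * sympJ n * A).mulVec (ξ k) with htdef
    have hconjd : (starRingEnd ℂ) (d j)
        = (starRingEnd ℂ) (c j) * Complex.exp (-(1/2 : ℂ) * (a : ℂ)) := by
      rw [hddef]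
      simp only [_root_.map_mul, ← Complex.exp_conj, _root_.map_neg, map_div₀, _root_.map_one,
        map_ofNat, Complex.conj_ofReal]
      rfl
    have hexp : Complex.exp (-(1/2 : ℂ) * ((a + b - 2*q : ℝ) : ℂ)) * Complex.exp (Complex.I * (p : ℂ))
        = Complex.exp (-(1/2 : ℂ) * (a : ℂ)) * Complex.exp (-(1/2 : ℂ) * (b : ℂ))
          * (Complex.exp (Complex.I * (t : ℂ))
            * Complex.exp ((q : ℂ) + Complex.I * ((p - t : ℝ) : ℂ))) := by
      rw [← Complex.exp_add, ← Complex.exp_add, ← Complex.exp_add, ← Complex.exp_add]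
      congr 1
      push_cast
      ring
    simp only [twistedKernel, hFdef]
    simp only [hconjd]
    simp only [hGval, hddef, hAarg, ht, hBval, hQ]
    rw [← hbdef, ← hqdef, ← hpdef]
    push_cast
    push_cast at hexp
    linear_combination ((starRingEnd ℂ) (c j) * c k
      * f (A.mulVec (ξ k) - A.mulVec (ξ j))) * hexp
  -- partial sums
  set T : ℕ → ℂ := fun N => ∑ j, ∑ k, (starRingEnd ℂ) (d j) * d k *
    (F j k * ∑ i ∈ Finset.range N, (((i.factorial : ℝ)⁻¹ : ℝ) : ℂ) * G j k ^ i) with hTdef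
  have hTnn : ∀ N, 0 ≤ T N := by
    intro N
    apply key_nonneg hFq
    apply gramSum_sum
    intro i _
    exact gramSum_smul (by positivity) (gramSum_pow hGram i)
  have hlim : Tendsto T atTop
      (𝓝 (∑ j, ∑ k, (starRingEnd ℂ) (d j) * d k * (F j k * Complex.exp (G j k)))) := by
    apply tendsto_finset_sum
    intro j _
    apply tendsto_finset_sum
    intro k _
    have hs : HasSum (fun i : ℕ => (((i.factorial : ℝ)⁻¹ : ℝ) : ℂ) * G j k ^ i)
        (Complex.exp (G j k)) := by
      have h0 := NormedSpace.expSeries_div_hasSum_exp (G j k)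
      have h1 : NormedSpace.exp (G j k) = Complex.exp (G j k) := by
        rw [Complex.exp_eq_exp_ℂ]
      rw [h1] at h0
      have h2 : (fun i : ℕ => G j k ^ i / (i.factorial : ℂ))
          = fun i : ℕ => (((i.factorial : ℝ)⁻¹ : ℝ) : ℂ) * G j k ^ i := by
        funext i
        push_cast
        rw [div_eq_mul_inv, mul_comm]
      rw [h2] at h0
      exact h0
    exact ((hs.tendsto_sum_nat).const_mul (F j k)).const_mul ((starRingEnd ℂ) (d j) * d k)
  have hrw : ∑ j, ∑ k, (starRingEnd ℂ) (c j) * c k *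
      (twistedKernel (fun z =>
        Complex.exp (-(1/2 : ℂ) * ((z ⬝ᵥ M.mulVec z : ℝ) : ℂ)) * f (A.mulVec z)) (ξ j) (ξ k))
      = ∑ j, ∑ k, (starRingEnd ℂ) (d j) * d k * (F j k * Complex.exp (G j k)) := by
    apply Finset.sum_congr rfl
    intro j _
    apply Finset.sum_congr rfl
    intro k _
    exact hpt j k
  haveI := Complex.orderClosedTopology
  rw [hrw]
  exact ge_of_tendsto' hlim hTnn
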